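/- Let c₀ and c be orthonormal bases of V₀ and V₁ respectively (indexed by finite types), let b = (v₁, …, vₙ) be any basis of 𝔹, and let P be the Gram matrix P_{ij} = ⟪v_i, v_j⟫. Let Dᵗ be the matrix of dᵗ with respect to c₀ and c, and let A be the matrix of L : 𝔹 → V₁ with respect to b and c (the paper's matrix D_q^{*,t,p} of (ð_q^{t,p})*). Then P is invertible and the matrix of the persistent sheaf Laplacian Δ with respect to the orthonormal basis c is Dᵗ·(Dᵗ)ᵀ + A·P⁻¹·Aᵀ. -/

import Mathlib

noncomputable section

open LinearMap Matrix RealInnerProductSpace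

variable {W₀ W₁ W₂ : Type*}
  [NormedAddCommGroup W₀] [InnerProductSpace ℝ W₀] [FiniteDimensional ℝ W₀]
  [NormedAddCommGroup W₁] [InnerProductSpace ℝ W₁] [FiniteDimensional ℝ W₁]
  [NormedAddCommGroup W₂] [InnerProductSpace ℝ W₂] [FiniteDimensional ℝ W₂]

/-- The compressed map `dᵗ : V₀ → V₁`, namely `π ∘ d₀` restricted to `V₀`, where
`π` is the orthogonal projection of `W₁` onto `V₁`. -/
def compressedMap (d₀ : W₀ →ₗ[ℝ] W₁) (V₀ : Submodule ℝ W₀) (V₁ : Submodule ℝ W₁) :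
    V₀ →ₗ[ℝ] V₁ :=
  (V₁.orthogonalProjectionOnto).toLinearMap ∘ₗ d₀ ∘ₗ V₀.subtype

/-- The subspace `𝔹 = {e ∈ W₂ : d₁†(e) ∈ V₁}` of `W₂`. -/
def sheafB (d₁ : W₁ →ₗ[ℝ] W₂) (V₁ : Submodule ℝ W₁) : Submodule ℝ W₂ :=
  V₁.comap (LinearMap.adjoint d₁)

/-- The map `L : 𝔹 → V₁` obtained by restricting `d₁†` to `𝔹`. -/
def sheafL (d₁ : W₁ →ₗ[ℝ] W₂) (V₁ : Submodule ℝ W₁) : sheafB d₁ V₁ →ₗ[ℝ] V₁ :=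
  (LinearMap.adjoint d₁).restrict (fun _ hx => hx)

/-- The persistent sheaf Laplacian `Δ = L ∘ L† + dt ∘ dt† : V₁ → V₁`, built from
`d₁` (via `L`, the restriction of `d₁†` to `𝔹`) and a compressed map `dt`. -/
def PSL {V₀ : Submodule ℝ W₀} (d₁ : W₁ →ₗ[ℝ] W₂) (V₁ : Submodule ℝ W₁)
    (dt : V₀ →ₗ[ℝ] V₁) : V₁ →ₗ[ℝ] V₁ :=
  sheafL d₁ V₁ ∘ₗ LinearMap.adjoint (sheafL d₁ V₁) + dt ∘ₗ LinearMap.adjoint dt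

lemma isUnit_gram {E ι : Type*} [NormedAddCommGroup E] [InnerProductSpace ℝ E]
    [Fintype ι] [DecidableEq ι] (b : Module.Basis ι ℝ E) (P : Matrix ι ι ℝ)
    (hP : ∀ i j, P i j = ⟪b i, b j⟫) : IsUnit P := by
  rw [← Matrix.mulVec_injective_iff_isUnit]
  intro x y hxy
  have key : ∀ x : ι → ℝ, P.mulVec x = 0 → x = 0 := by
    intro x hx
    have h1 : ∀ i, ⟪b i, ∑ j, x j • b j⟫ = 0 := by
      intro i
      have := congrFun hx i
      simpa [Matrix.mulVec, dotProduct, hP, inner_sum, inner_smul_right,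
        mul_comm] using this
    have h2 : (∑ j, x j • b j) = 0 := by
      have hself : ⟪∑ i, x i • b i, ∑ j, x j • b j⟫ = 0 := by
        rw [sum_inner]
        exact Finset.sum_eq_zero fun i _ => by
          rw [real_inner_smul_left, h1 i, mul_zero]
      exact inner_self_eq_zero.mp hself
    have h3 := Fintype.linearIndependent_iff.mp b.linearIndependent x h2
    funext i; exact h3 i
  have h0 : P.mulVec (x - y) = 0 := by
    rw [Matrix.mulVec_sub, hxy, sub_self]
  exact sub_eq_zero.mp (key _ h0)

lemma adjoint_matrix_general {E F ι κ : Type*}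
    [NormedAddCommGroup E] [InnerProductSpace ℝ E] [FiniteDimensional ℝ E]
    [NormedAddCommGroup F] [InnerProductSpace ℝ F] [FiniteDimensional ℝ F]
    [Fintype ι] [DecidableEq ι] [Fintype κ] [DecidableEq κ]
    (b : Module.Basis ι ℝ E) (c : OrthonormalBasis κ ℝ F)
    (P : Matrix ι ι ℝ) (hP : ∀ i j, P i j = ⟪b i, b j⟫)
    (L : E →ₗ[ℝ] F) :
    P * LinearMap.toMatrix c.toBasis b (LinearMap.adjoint L)
      = (LinearMap.toMatrix b c.toBasis L)ᵀ := by
  ext i j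
  set M := LinearMap.toMatrix c.toBasis b (LinearMap.adjoint L) with hM
  have expand : (LinearMap.adjoint L) (c j) = ∑ k, M k j • b k := by
    conv_lhs => rw [← b.sum_repr ((LinearMap.adjoint L) (c j))]
    refine Finset.sum_congr rfl fun k _ => ?_
    congr 1
    simp [hM, LinearMap.toMatrix_apply]
  have h1 : (P * M) i j = ⟪b i, (LinearMap.adjoint L) (c j)⟫ := by
    rw [expand, inner_sum]
    simp [Matrix.mul_apply, hP, real_inner_smul_right, mul_comm]
  rw [h1, LinearMap.adjoint_inner_right]
  rw [Matrix.transpose_apply, LinearMap.toMatrix_apply]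
  rw [OrthonormalBasis.coe_toBasis_repr_apply, OrthonormalBasis.repr_apply_apply,
    real_inner_comm]


/-- matrix representation of the persistent sheaf Laplacian. If `c₀, c`
are orthonormal bases of `V₀, V₁`, `b` is any basis of `𝔹` with Gram matrix `P`, `Dᵗ`
is the matrix of `dᵗ` and `A` the matrix of `L`, then `P` is invertible and the matrix
of `Δ` in the basis `c` is `Dᵗ (Dᵗ)ᵀ + A P⁻¹ Aᵀ`. -/
theorem toMatrix_PSL (d₀ : W₀ →ₗ[ℝ] W₁) (d₁ : W₁ →ₗ[ℝ] W₂)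
    (V₀ : Submodule ℝ W₀) (V₁ : Submodule ℝ W₁)
    {ι₀ ι ιB : Type*} [Fintype ι₀] [Fintype ι] [Fintype ιB]
    [DecidableEq ι₀] [DecidableEq ι] [DecidableEq ιB]
    (c₀ : OrthonormalBasis ι₀ ℝ V₀) (c : OrthonormalBasis ι ℝ V₁)
    (b : Module.Basis ιB ℝ (sheafB d₁ V₁))
    (P : Matrix ιB ιB ℝ) (hP : ∀ i j, P i j = ⟪b i, b j⟫) :
    IsUnit P ∧
      LinearMap.toMatrix c.toBasis c.toBasis (PSL d₁ V₁ (compressedMap d₀ V₀ V₁)) =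
        LinearMap.toMatrix c₀.toBasis c.toBasis (compressedMap d₀ V₀ V₁) *
          (LinearMap.toMatrix c₀.toBasis c.toBasis (compressedMap d₀ V₀ V₁))ᵀ +
        LinearMap.toMatrix b c.toBasis (sheafL d₁ V₁) * P⁻¹ *
          (LinearMap.toMatrix b c.toBasis (sheafL d₁ V₁))ᵀ := by
  have hUnit : IsUnit P := isUnit_gram b P hP
  refine ⟨hUnit, ?_⟩
  set L := sheafL d₁ V₁
  set dt := compressedMap d₀ V₀ V₁
  set A := LinearMap.toMatrix b c.toBasis L with hA
  set M := LinearMap.toMatrix c.toBasis b (LinearMap.adjoint L) with hMdef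
  have hPM : P * M = Aᵀ := adjoint_matrix_general b c P hP L
  have hdet : IsUnit P.det := (Matrix.isUnit_iff_isUnit_det P).mp hUnit
  have hM : M = P⁻¹ * Aᵀ := by
    rw [← hPM, ← Matrix.mul_assoc, Matrix.nonsing_inv_mul P hdet, Matrix.one_mul]
  rw [PSL, map_add, LinearMap.toMatrix_comp c.toBasis b, ← hA, ← hMdef, hM,
    LinearMap.toMatrix_comp c.toBasis c₀.toBasis,
    LinearMap.toMatrix_adjoint, Matrix.conjTranspose_eq_transpose_of_trivial,
    ← Matrix.mul_assoc]
  rw [add_comm]
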